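/- Let F(x,n|y) be the first hitting probabilities of a nearest-neighbour random walk on ℤ (so F(x,n|y) = 0 for n < |x-y|) with F(x,|x-x_r| | x_r) > 0. Then as r → 1⁻, the mean first hitting time under resetting to x_r satisfies ⟨τ_r⟩ · (1-r)^{|x-x_r|} → 1 / F(x, |x-x_r| | x_r). -/
import Mathlib

open Filter

private lemma sumS (c : ℕ → ℝ) (hc : ∀ n, 0 ≤ c n) (hsum : Summable c)
    {s : ℝ} (hs0 : 0 ≤ s) (hs1 : s ≤ 1) :
    Summable (fun n => c n * s ^ n) := by
  refine Summable.of_nonneg_of_le (fun n => mul_nonneg (hc n) (pow_nonneg hs0 n))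
    (fun n => ?_) hsum
  calc c n * s ^ n ≤ c n * 1 := by
        exact mul_le_mul_of_nonneg_left (pow_le_one₀ hs0 hs1) (hc n)
    _ = c n := mul_one _

private lemma tailBound (c : ℕ → ℝ) (hc : ∀ n, 0 ≤ c n) (hsum : Summable c)
    (hle : ∑' n, c n ≤ 1) {s : ℝ} (hs0 : 0 ≤ s) (hs1 : s ≤ 1) :
    ∑' n, c (n + 1) * s ^ (n + 1) ≤ s := by
  have h1 : Summable (fun n => c (n + 1) * s ^ (n + 1)) :=
    ((sumS c hc hsum hs0 hs1).comp_injective (add_left_injective 1))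
  have h2 : Summable (fun n => c (n + 1)) := by
    exact (summable_nat_add_iff 1).mpr hsum
  have h3 : Summable (fun n => c (n + 1) * s) := h2.mul_right s
  have hb : ∀ n, c (n + 1) * s ^ (n + 1) ≤ c (n + 1) * s := by
    intro n
    have : s ^ (n + 1) ≤ s ^ 1 := pow_le_pow_of_le_one hs0 hs1 (by omega)
    simpa using mul_le_mul_of_nonneg_left (by simpa using this) (hc (n + 1))
  calc ∑' n, c (n + 1) * s ^ (n + 1) ≤ ∑' n, c (n + 1) * s := Summable.tsum_le_tsum hb h1 h3
    _ = (∑' n, c (n + 1)) * s := h2.tsum_mul_right s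
    _ ≤ 1 * s := by
        refine mul_le_mul_of_nonneg_right ?_ hs0
        refine le_trans ?_ hle
        have := (Summable.sum_add_tsum_nat_add 1 hsum).symm
        have hnn : 0 ≤ ∑ i ∈ Finset.range 1, c i := Finset.sum_nonneg fun i _ => hc i
        linarith [this]
    _ = s := one_mul s

theorem stmt_6 (x x₀ xr : ℤ) (F G : ℕ → ℝ)
    (d : ℕ) (hd : d = (x - xr).natAbs)
    (hFzero : ∀ n, n < d → F n = 0) (hFd : 0 < F d)
    (hFnonneg : ∀ n, 0 ≤ F n) (hFsummable : Summable F) (hFsum : ∑' n, F n ≤ 1)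
    (hG0 : G 0 = 0) (hGnonneg : ∀ n, 0 ≤ G n) (hGsummable : Summable G)
    (hGsum : ∑' n, G n ≤ 1) :
    Tendsto (fun r : ℝ =>
        ((1 - ∑' n, G n * (1 - r) ^ n) / (r * ∑' n, F n * (1 - r) ^ n))
          * (1 - r) ^ d)
      (nhdsWithin 1 (Set.Iio 1)) (nhds (1 / F d)) := by
  set l := nhdsWithin (1 : ℝ) (Set.Iio 1) with hl
  -- shifted F
  set Fd : ℕ → ℝ := fun n => F (n + d) with hFdDef
  have hFdnn : ∀ n, 0 ≤ Fd n := fun n => hFnonneg _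
  have hFdsummable : Summable Fd := (summable_nat_add_iff d).mpr hFsummable
  have hFdsum : ∑' n, Fd n ≤ 1 := by
    have := (Summable.sum_add_tsum_nat_add d hFsummable)
    have hnn : 0 ≤ ∑ i ∈ Finset.range d, F i := Finset.sum_nonneg fun i _ => hFnonneg i
    simpa [hFdDef] using by linarith [this]
  -- membership of Ioo
  have hmem : Set.Ioo (0 : ℝ) 1 ∈ l := by
    rw [hl, ← Set.Ioi_inter_Iio]
    exact Filter.inter_mem (nhdsWithin_le_nhds (Ioi_mem_nhds one_pos)) self_mem_nhdsWithin
  have hs : Tendsto (fun r : ℝ => 1 - r) l (nhds 0) := by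
    have : Tendsto (fun r : ℝ => 1 - r) (nhds 1) (nhds 0) := by
      have := (tendsto_const_nhds (x := (1:ℝ)) (f := nhds (1:ℝ))).sub tendsto_id
      simpa using this
    exact this.comp (nhdsWithin_le_nhds)
  -- G part
  have hg : Tendsto (fun r : ℝ => ∑' n, G n * (1 - r) ^ n) l (nhds 0) := by
    refine squeeze_zero' ?_ ?_ hs
    · filter_upwards [hmem] with r hr
      exact tsum_nonneg fun n => mul_nonneg (hGnonneg n) (pow_nonneg (by linarith [hr.2]) n)
    · filter_upwards [hmem] with r hr
      have hs0 : (0:ℝ) ≤ 1 - r := by linarith [hr.2]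
      have hs1 : (1:ℝ) - r ≤ 1 := by linarith [hr.1]
      have hsm := sumS G hGnonneg hGsummable hs0 hs1
      rw [Summable.tsum_eq_zero_add hsm]
      simpa [hG0] using tailBound G hGnonneg hGsummable hGsum hs0 hs1
  -- shifted F series tendsto
  have hh : Tendsto (fun r : ℝ => ∑' n, Fd n * (1 - r) ^ n) l (nhds (F d)) := by
    have h0 : Tendsto (fun r : ℝ => (∑' n, Fd n * (1 - r) ^ n) - F d) l (nhds 0) := by
      refine squeeze_zero' ?_ ?_ hs
      · filter_upwards [hmem] with r hr
        have hs0 : (0:ℝ) ≤ 1 - r := by linarith [hr.2]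
        have hs1 : (1:ℝ) - r ≤ 1 := by linarith [hr.1]
        have hsm := sumS Fd hFdnn hFdsummable hs0 hs1
        rw [Summable.tsum_eq_zero_add hsm]
        have : 0 ≤ ∑' n, Fd (n + 1) * (1 - r) ^ (n + 1) :=
          tsum_nonneg fun n => mul_nonneg (hFdnn _) (pow_nonneg hs0 _)
        simp only [hFdDef, pow_zero, mul_one, Nat.zero_add]
        linarith
      · filter_upwards [hmem] with r hr
        have hs0 : (0:ℝ) ≤ 1 - r := by linarith [hr.2]
        have hs1 : (1:ℝ) - r ≤ 1 := by linarith [hr.1]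
        have hsm := sumS Fd hFdnn hFdsummable hs0 hs1
        rw [Summable.tsum_eq_zero_add hsm]
        have := tailBound Fd hFdnn hFdsummable hFdsum hs0 hs1
        simp only [hFdDef, pow_zero, mul_one, Nat.zero_add]
        linarith
    have := h0.add (tendsto_const_nhds (x := F d))
    simpa using this
  have hr1 : Tendsto (fun r : ℝ => r) l (nhds 1) := tendsto_id.mono_left nhdsWithin_le_nhds
  have hnum : Tendsto (fun r : ℝ => 1 - ∑' n, G n * (1 - r) ^ n) l (nhds 1) := by
    have := (tendsto_const_nhds (x := (1:ℝ)) (f := l)).sub hg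
    simpa using this
  have hden : Tendsto (fun r : ℝ => r * ∑' n, Fd n * (1 - r) ^ n) l (nhds (F d)) := by
    have := hr1.mul hh
    simpa using this
  have hdiv : Tendsto (fun r : ℝ =>
      (1 - ∑' n, G n * (1 - r) ^ n) / (r * ∑' n, Fd n * (1 - r) ^ n)) l (nhds (1 / F d)) :=
    hnum.div hden (ne_of_gt hFd)
  refine hdiv.congr' ?_
  filter_upwards [hmem] with r hr
  have hs0 : (0:ℝ) ≤ 1 - r := by linarith [hr.2]
  have hs0' : (0:ℝ) < 1 - r := by linarith [hr.2]
  have hs1 : (1:ℝ) - r ≤ 1 := by linarith [hr.1]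
  -- Σ F n s^n = s^d * Σ Fd n s^n
  have hsm := sumS F hFnonneg hFsummable hs0 hs1
  have hsplit : ∑' n, F n * (1 - r) ^ n = (1 - r) ^ d * ∑' n, Fd n * (1 - r) ^ n := by
    have key := Summable.sum_add_tsum_nat_add d hsm
    have hz : ∑ i ∈ Finset.range d, F i * (1 - r) ^ i = 0 := by
      refine Finset.sum_eq_zero fun i hi => ?_
      rw [hFzero i (Finset.mem_range.mp hi), zero_mul]
    have : ∑' n, F (n + d) * (1 - r) ^ (n + d)
        = (1 - r) ^ d * ∑' n, Fd n * (1 - r) ^ n := by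
      rw [← tsum_mul_left]
      congr 1
      funext n
      rw [pow_add]
      ring
    rw [← key, hz, zero_add, this]
  have hc : (1 - r) ^ d ≠ 0 := pow_ne_zero d (ne_of_gt hs0')
  rw [hsplit]
  rw [show r * ((1 - r) ^ d * ∑' n, Fd n * (1 - r) ^ n)
      = (r * ∑' n, Fd n * (1 - r) ^ n) * (1 - r) ^ d by ring,
    div_mul_eq_mul_div, mul_div_mul_right _ _ hc]
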